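/- Fix an integer m ≥ 2 and a sequence ā = (a_1, a_2, …) with 0 < a_k ≤ 1/(m+1) for all k, and let I_ā be the associated Cantor-like set. If liminf_{k→∞} a_k > 0, then I_ā is uniformly perfect. -/
import Mathlib


open MeasureTheory Filter Metric

/-- A compact set `F` with at least two points is uniformly perfect if there is `c > 0`
such that for every `a ∈ F` and every `r` with `0 < r < diam F` the annulus
`{y : c·r < ‖y − a‖ < r}` meets `F`. -/
def UniformlyPerfect {X : Type*} [NormedAddCommGroup X] (F : Set X) : Prop :=
  IsCompact F ∧ F.Nontrivial ∧
    ∃ c : ℝ, 0 < c ∧ ∀ a ∈ F, ∀ r : ℝ, 0 < r → r < Metric.diam F →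
      ∃ y ∈ F, c * r < ‖y - a‖ ∧ ‖y - a‖ < r

/-- A compact set is hereditarily non uniformly perfect (HNUP) if no (compact) subset
of it is uniformly perfect. -/
def HNUP {X : Type*} [NormedAddCommGroup X] (E : Set X) : Prop :=
  ∀ F : Set X, F ⊆ E → ¬ UniformlyPerfect F

/-- `A_k = a_1 ⋯ a_k` (with `A_0 = 1`). -/
noncomputable def cantorA (a : ℕ → ℝ) (k : ℕ) : ℝ := ∏ i ∈ Finset.Icc 1 k, a i

/-- The Cantor-like set
`I_ā = { Σ_{k=1}^∞ d_k (A_{k−1} − A_k)/(m−1) : each d_k ∈ {0, 1, …, m−1} }`. -/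
noncomputable def cantorLikeSet (m : ℕ) (a : ℕ → ℝ) : Set ℝ :=
  { x | ∃ d : ℕ → ℕ, (∀ k, d k < m) ∧
      x = ∑' k : ℕ, (d (k + 1) : ℝ) * (cantorA a k - cantorA a (k + 1)) / (m - 1) }


set_option linter.unusedSectionVars false

section
variable (m : ℕ) (hm : 2 ≤ m) (a : ℕ → ℝ)
  (ha : ∀ k : ℕ, 1 ≤ k → 0 < a k ∧ a k ≤ 1 / (m + 1))

lemma cantorA_zero : cantorA a 0 = 1 := by simp [cantorA]

lemma cantorA_succ (k : ℕ) : cantorA a (k+1) = cantorA a k * a (k+1) := by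
  simpa [cantorA] using Finset.prod_Icc_succ_top (Nat.le_add_left 1 k) a

include ha in
lemma cantorA_pos (k : ℕ) : 0 < cantorA a k := by
  refine Finset.prod_pos fun i hi => (ha i ?_).1
  exact (Finset.mem_Icc.mp hi).1

include hm ha in
lemma cantorA_le_pow (k : ℕ) : cantorA a k ≤ (1/(m+1))^k := by
  induction k with
  | zero => simp [cantorA_zero]
  | succ n ih =>
    rw [cantorA_succ, pow_succ]
    have h1 := (ha (n+1) (Nat.le_add_left 1 n)).2
    have h2 := cantorA_pos m a ha n
    have : (0:ℝ) < 1/(m+1) := by positivity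
    nlinarith

include hm ha in
lemma cantorA_succ_le (k : ℕ) : cantorA a (k+1) ≤ cantorA a k * (1/(m+1)) := by
  rw [cantorA_succ]
  have h1 := (ha (k+1) (Nat.le_add_left 1 k)).2
  have h2 := cantorA_pos m a ha k
  nlinarith

include hm ha in
lemma cantorA_tendsto : Tendsto (cantorA a) atTop (nhds 0) := by
  have h0 : (0:ℝ) ≤ 1/(m+1) := by positivity
  have h1 : (1:ℝ)/(m+1) < 1 := by
    rw [div_lt_one (by positivity)]
    have : (2:ℝ) ≤ m := by exact_mod_cast hm
    linarith
  refine squeeze_zero (fun k => (cantorA_pos m a ha k).le) (cantorA_le_pow m hm a ha) ?_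
  exact tendsto_pow_atTop_nhds_zero_of_lt_one h0 h1

include hm ha in
lemma gaps_hasSum : HasSum (fun k => cantorA a k - cantorA a (k+1)) 1 := by
  have hnn : ∀ k, 0 ≤ cantorA a k - cantorA a (k+1) := by
    intro k
    have := cantorA_succ_le m hm a ha k
    have h2 := cantorA_pos m a ha k
    have : (1:ℝ)/(m+1) ≤ 1 := by
      rw [div_le_one (by positivity)]; norm_num
    nlinarith [cantorA_succ_le m hm a ha k]
  rw [hasSum_iff_tendsto_nat_of_nonneg hnn]
  have : ∀ n, ∑ i ∈ Finset.range n, (cantorA a i - cantorA a (i+1)) = 1 - cantorA a n := by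
    intro n; rw [Finset.sum_range_sub' (cantorA a) n, cantorA_zero]
  simp only [this]
  simpa using tendsto_const_nhds.sub (cantorA_tendsto m hm a ha)

end

section
variable (m : ℕ) (hm : 2 ≤ m) (a : ℕ → ℝ)
  (ha : ∀ k : ℕ, 1 ≤ k → 0 < a k ∧ a k ≤ 1 / (m + 1))

/-- term of the digit series -/
noncomputable def cterm (d : ℕ → ℕ) (k : ℕ) : ℝ :=
  (d (k + 1) : ℝ) * (cantorA a k - cantorA a (k + 1)) / (m - 1)

include hm ha in
lemma gap_nonneg (k : ℕ) : 0 ≤ cantorA a k - cantorA a (k+1) := by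
  have h2 := cantorA_pos m a ha k
  have h3 : (1:ℝ)/(m+1) ≤ 1 := by
    rw [div_le_one (by positivity)]; norm_num
  nlinarith [cantorA_succ_le m hm a ha k]

include hm ha in
lemma cterm_nonneg (d : ℕ → ℕ) (k : ℕ) : 0 ≤ cterm m a d k := by
  have hm1 : (1:ℝ) ≤ (m:ℝ) - 1 := by
    have : (2:ℝ) ≤ m := by exact_mod_cast hm
    linarith
  have := gap_nonneg m hm a ha k
  unfold cterm; positivity

include hm ha in
lemma cterm_le_gap (d : ℕ → ℕ) (hd : ∀ k, d k < m) (k : ℕ) :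
    cterm m a d k ≤ cantorA a k - cantorA a (k+1) := by
  have hm1 : (0:ℝ) < (m:ℝ) - 1 := by
    have : (2:ℝ) ≤ m := by exact_mod_cast hm
    linarith
  have hdle : (d (k+1) : ℝ) ≤ (m:ℝ) - 1 := by
    have := hd (k+1)
    have : (d (k+1) : ℝ) ≤ (m:ℝ) - 1 := by
      have h := Nat.lt_iff_add_one_le.mp (hd (k+1))
      have : ((d (k+1) + 1 : ℕ) : ℝ) ≤ (m:ℝ) := by exact_mod_cast h
      push_cast at this; linarith
    exact this
  have hg := gap_nonneg m hm a ha k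
  rw [cterm, div_le_iff₀ hm1]
  nlinarith

include hm ha in
lemma cterm_summable (d : ℕ → ℕ) (hd : ∀ k, d k < m) : Summable (cterm m a d) :=
  Summable.of_nonneg_of_le (cterm_nonneg m hm a ha d) (cterm_le_gap m hm a ha d hd)
    (gaps_hasSum m hm a ha).summable

include hm ha in
lemma mem_bounds (d : ℕ → ℕ) (hd : ∀ k, d k < m) :
    (∑' k, cterm m a d k) ∈ Set.Icc (0:ℝ) 1 := by
  constructor
  · exact tsum_nonneg (cterm_nonneg m hm a ha d)
  · calc (∑' k, cterm m a d k) ≤ ∑' k, (cantorA a k - cantorA a (k+1)) :=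
        Summable.tsum_le_tsum (cterm_le_gap m hm a ha d hd) (cterm_summable m hm a ha d hd)
          (gaps_hasSum m hm a ha).summable
      _ = 1 := (gaps_hasSum m hm a ha).tsum_eq

end

section
variable (m : ℕ) (hm : 2 ≤ m) (a : ℕ → ℝ)
  (ha : ∀ k : ℕ, 1 ≤ k → 0 < a k ∧ a k ≤ 1 / (m + 1))

noncomputable def cantorLikeSet' (m : ℕ) (a : ℕ → ℝ) : Set ℝ :=
  { x | ∃ d : ℕ → ℕ, (∀ k, d k < m) ∧
      x = ∑' k : ℕ, (d (k + 1) : ℝ) * (cantorA a k - cantorA a (k + 1)) / (m - 1) }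

include hm ha in
lemma cls_eq_range :
    cantorLikeSet' m a =
      Set.range (fun e : ℕ → Fin m => ∑' k, cterm m a (fun i => (e i : ℕ)) k) := by
  haveI : NeZero m := ⟨by omega⟩
  ext x
  constructor
  · rintro ⟨d, hd, rfl⟩
    refine ⟨fun i => ⟨d i, hd i⟩, ?_⟩
    rfl
  · rintro ⟨e, rfl⟩
    exact ⟨fun i => (e i : ℕ), fun k => (e k).isLt, rfl⟩

include hm ha in
lemma cls_compact : IsCompact (cantorLikeSet' m a) := by
  haveI : NeZero m := ⟨by omega⟩
  rw [cls_eq_range m hm a ha]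
  apply isCompact_range
  apply continuous_tsum (u := fun k => cantorA a k - cantorA a (k+1))
  · intro k
    have h1 : Continuous (fun e : ℕ → Fin m => e (k+1)) := continuous_apply (k+1)
    have h2 : Continuous (fun x : Fin m => ((x : ℕ) : ℝ)) := continuous_of_discreteTopology
    exact ((h2.comp h1).mul continuous_const).div_const _
  · exact (gaps_hasSum m hm a ha).summable
  · intro k e
    have h1 := cterm_nonneg m hm a ha (fun i => (e i : ℕ)) k
    have h2 := cterm_le_gap m hm a ha (fun i => (e i : ℕ)) (fun i => (e i).isLt) k
    rw [Real.norm_eq_abs, abs_of_nonneg h1]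
    exact h2

end

section
variable (m : ℕ) (hm : 2 ≤ m) (a : ℕ → ℝ)
  (ha : ∀ k : ℕ, 1 ≤ k → 0 < a k ∧ a k ≤ 1 / (m + 1))

include hm ha in
lemma zero_mem : (0:ℝ) ∈ cantorLikeSet' m a := by
  refine ⟨fun _ => 0, fun k => by show 0 < m; omega, ?_⟩
  simp

include hm ha in
lemma one_mem : (1:ℝ) ∈ cantorLikeSet' m a := by
  refine ⟨fun _ => m - 1, fun k => by show m - 1 < m; omega, ?_⟩
  have hm1 : (0:ℝ) < (m:ℝ) - 1 := by
    have : (2:ℝ) ≤ m := by exact_mod_cast hm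
    linarith
  have : ∀ k : ℕ, ((m - 1 : ℕ) : ℝ) * (cantorA a k - cantorA a (k + 1)) / (m - 1)
      = cantorA a k - cantorA a (k+1) := by
    intro k
    have : ((m - 1 : ℕ) : ℝ) = (m:ℝ) - 1 := by
      have : 1 ≤ m := by omega
      push_cast [this]; ring
    rw [this]; field_simp
  simp only [this]
  exact ((gaps_hasSum m hm a ha).tsum_eq).symm

include ha in
lemma exists_delta (hlim : 0 < Filter.liminf a Filter.atTop) :
    ∃ δ : ℝ, 0 < δ ∧ ∀ i : ℕ, 1 ≤ i → δ ≤ a i := by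
  have hb : Filter.IsBoundedUnder (· ≥ ·) Filter.atTop a := by
    refine ⟨0, ?_⟩
    simp only [Filter.eventually_map, Filter.eventually_atTop]
    exact ⟨1, fun i hi => (ha i hi).1.le⟩
  have hev : ∀ᶠ i in Filter.atTop, Filter.liminf a Filter.atTop / 2 < a i :=
    Filter.eventually_lt_of_lt_liminf (by linarith) hb
  obtain ⟨K, hK⟩ := Filter.eventually_atTop.mp hev
  set L := Filter.liminf a Filter.atTop / 2 with hL
  set s : Finset ℕ := Finset.Icc 1 (K+1) with hs
  have hsne : s.Nonempty := ⟨1, by simp [hs]⟩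
  set δ := min L ((s.image a).min' (hsne.image a)) with hδ
  refine ⟨δ, ?_, ?_⟩
  · apply lt_min (by linarith)
    obtain ⟨i, hi, hieq⟩ := Finset.mem_image.mp ((s.image a).min'_mem (hsne.image a))
    rw [← hieq]
    exact (ha i (Finset.mem_Icc.mp hi).1).1
  · intro i hi
    rcases le_or_gt i (K+1) with h | h
    · refine le_trans (min_le_right _ _) ?_
      exact Finset.min'_le _ _ (Finset.mem_image_of_mem a (Finset.mem_Icc.mpr ⟨hi, h⟩))
    · exact le_trans (min_le_left _ _) (hK i (by omega)).le

end


/-- If `liminf a_k > 0`, the Cantor-like set `I_ā` is uniformly perfect. -/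
theorem stmt5 (m : ℕ) (hm : 2 ≤ m) (a : ℕ → ℝ)
    (ha : ∀ k : ℕ, 1 ≤ k → 0 < a k ∧ a k ≤ 1 / (m + 1))
    (hlim : 0 < Filter.liminf a Filter.atTop) :
    UniformlyPerfect (cantorLikeSet m a) := by
  have hcls : cantorLikeSet m a = cantorLikeSet' m a := rfl
  obtain ⟨δ, hδ, hδa⟩ := exists_delta m a ha hlim
  have hM : (2:ℝ) ≤ (m:ℝ) := by exact_mod_cast hm
  have hm1 : (1:ℝ) ≤ (m:ℝ) - 1 := by linarith
  have hsub : cantorLikeSet' m a ⊆ Set.Icc (0:ℝ) 1 := by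
    rintro x ⟨d, hd, rfl⟩
    exact mem_bounds m hm a ha d hd
  have hdiam : Metric.diam (cantorLikeSet' m a) ≤ 1 := by
    calc Metric.diam (cantorLikeSet' m a) ≤ Metric.diam (Set.Icc (0:ℝ) 1) :=
        Metric.diam_mono hsub (Metric.isBounded_Icc 0 1)
      _ = 1 := by rw [Real.diam_Icc zero_le_one]; norm_num
  rw [hcls]
  refine ⟨cls_compact m hm a ha, ⟨0, zero_mem m hm a ha, 1, one_mem m hm a ha, by norm_num⟩,
    δ / (2 * ((m:ℝ) + 1)), by positivity, ?_⟩
  rintro x ⟨d, hd, rfl⟩ r hr hrd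
  rw [show (∑' k : ℕ, (d (k + 1) : ℝ) * (cantorA a k - cantorA a (k + 1)) / ((m:ℝ) - 1))
      = ∑' k, cterm m a d k from rfl]
  have hr1 : r < 1 := lt_of_lt_of_le hrd hdiam
  -- find minimal K with A_K < r
  have hex : ∃ n, cantorA a n < r := by
    obtain ⟨n, hn⟩ := ((cantorA_tendsto m hm a ha).eventually
      (eventually_lt_nhds (show (0:ℝ) < r from hr))).exists
    exact ⟨n, hn⟩
  obtain ⟨K, hAK, hKmin⟩ : ∃ K, cantorA a K < r ∧ ∀ n < K, ¬ cantorA a n < r :=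
    ⟨Nat.find hex, Nat.find_spec hex, fun n hn => Nat.find_min hex hn⟩
  have hKpos : 1 ≤ K := by
    rcases Nat.eq_zero_or_pos K with h | h
    · exfalso
      rw [h, cantorA_zero] at hAK; linarith
    · exact h
  obtain ⟨j, hKeq⟩ : ∃ j, K = j + 1 := ⟨K - 1, by omega⟩
  have hAj : r ≤ cantorA a j := by
    by_contra h
    exact absurd (hKmin j (by omega)) (by push_neg; linarith)
  -- new digits
  set v : ℕ := if d (K + 1) = 0 then 1 else d (K + 1) - 1 with hv
  set e : ℕ → ℕ := Function.update d (K + 1) v with he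
  have hed : ∀ i, e i < m := by
    intro i
    rcases eq_or_ne i (K+1) with h | h
    · have hdK := hd (K+1)
      rw [he, h, Function.update_self, hv]
      split <;> omega
    · rw [he, Function.update_of_ne h]; exact hd i
  refine ⟨∑' k, cterm m a e k, ⟨e, hed, rfl⟩, ?_⟩
  have hsume := cterm_summable m hm a ha e hed
  have hsumd := cterm_summable m hm a ha d hd
  have hdiff : (∑' k, cterm m a e k) - (∑' k, cterm m a d k)
      = cterm m a e K - cterm m a d K := by
    rw [← Summable.tsum_sub hsume hsumd]
    refine tsum_eq_single K ?_
    intro b hb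
    have : e (b+1) = d (b+1) := Function.update_of_ne (by omega) _ _
    simp [cterm, this]
  have hgnn : (0:ℝ) ≤ cantorA a K - cantorA a (K+1) := gap_nonneg m hm a ha K
  have hmm : (0:ℝ) < (m:ℝ) - 1 := by linarith
  have hnorm : ‖(∑' k, cterm m a e k) - (∑' k, cterm m a d k)‖
      = (cantorA a K - cantorA a (K+1)) / ((m:ℝ) - 1) := by
    rw [hdiff]
    have heK : e (K+1) = v := Function.update_self _ _ _
    rcases Nat.eq_zero_or_pos (d (K+1)) with h0 | h0
    · have hv1 : v = 1 := by rw [hv, if_pos h0]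
      rw [cterm, cterm, heK, hv1, h0]
      push_cast
      rw [one_mul, zero_mul, zero_div, sub_zero, Real.norm_eq_abs,
        abs_of_nonneg (div_nonneg hgnn hmm.le)]
    · have hvc : (v:ℝ) = (d (K+1) : ℝ) - 1 := by
        rw [hv, if_neg (by omega), Nat.cast_sub h0]; norm_num
      rw [cterm, cterm, heK, hvc, Real.norm_eq_abs]
      have heq : (d (K+1) : ℝ) * (cantorA a K - cantorA a (K+1)) / ((m:ℝ)-1)
          - ((d (K+1):ℝ) - 1) * (cantorA a K - cantorA a (K+1)) / ((m:ℝ)-1)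
          = (cantorA a K - cantorA a (K+1)) / ((m:ℝ)-1) := by ring
      rw [abs_sub_comm, heq, abs_of_nonneg (div_nonneg hgnn hmm.le)]
  rw [hnorm]
  have hAKpos := cantorA_pos m a ha K
  have hA1pos := cantorA_pos m a ha (K+1)
  have hA1le : cantorA a (K+1) ≤ cantorA a K * (1/((m:ℝ)+1)) := cantorA_succ_le m hm a ha K
  have hAKeq : cantorA a K = cantorA a j * a K := by
    rw [hKeq]; exact cantorA_succ a j
  have haK : δ ≤ a K := hδa K hKpos
  have hδr : δ * r ≤ cantorA a K := by
    have hjpos := cantorA_pos m a ha j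
    nlinarith
  constructor
  · -- lower bound
    rw [div_mul_eq_mul_div, div_lt_div_iff₀ (by positivity) hmm]
    have hgg : cantorA a K * (m:ℝ) ≤ (cantorA a K - cantorA a (K+1)) * ((m:ℝ)+1) := by
      have h1 : cantorA a (K+1) * ((m:ℝ)+1) ≤ cantorA a K := by
        rw [mul_comm]
        calc ((m:ℝ)+1) * cantorA a (K+1) ≤ ((m:ℝ)+1) * (cantorA a K * (1/((m:ℝ)+1))) := by
              apply mul_le_mul_of_nonneg_left hA1le (by positivity)
          _ = cantorA a K := by field_simp
      nlinarith
    nlinarith [mul_pos hδ hr, mul_nonneg hgnn (by linarith : (0:ℝ) ≤ (m:ℝ)+1)]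
  · -- upper bound
    have h1 : (cantorA a K - cantorA a (K+1)) / ((m:ℝ)-1) ≤ cantorA a K - cantorA a (K+1) :=
      div_le_self hgnn hm1
    linarith
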